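/- arXiv:2402.03276 — 2 statements merged into one kernel-verified Lean document; each statement's English description precedes it below -/
import Mathlib

section
/- Suppose 0 < D ≤ 1, K ∈ ℤ⁺, and S ⊆ ℤ⁺ has D-density. Then for every η with 0 < η < D/(2−D), the set {m ∈ ℤ⁺ : for all natural numbers k with 0 ≤ k ≤ ⌊η·log₃ m⌋ and all natural numbers i with 0 ≤ i < K·3^k, 3^k·m + i ∈ S} has (D(1+η) − 2η)-density. -/
open scoped Classical in
/-- Number of elements of `A` in `{1, …, n}`. -/
noncomputable def countIn (A : Set ℕ) (n : ℕ) : ℕ :=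
  ((Finset.Icc 1 n).filter (fun m => m ∈ A)).card

/-- `S` has `(C,D)`-density: `#(S ∩ [1,N])/N ≥ 1 - C/N^D` for every positive `N`. -/
def hasCDdensity (S : Set ℕ) (C D : ℝ) : Prop :=
  ∀ N : ℕ, 0 < N → 1 - C / (N : ℝ) ^ D ≤ (countIn S N : ℝ) / N

/-- `S` has `D`-density: it has `(C,D)`-density for some `C > 0`. -/
def hasDdensity (S : Set ℕ) (D : ℝ) : Prop := ∃ C > 0, hasCDdensity S C D

/-- `S` is `*`-dense: it has `D`-density for some `0 < D ≤ 1`. -/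
def starDense (S : Set ℕ) : Prop := ∃ D, 0 < D ∧ D ≤ 1 ∧ hasDdensity S D

theorem leverage_density (D : ℝ) (hD0 : 0 < D) (hD1 : D ≤ 1) (K : ℕ) (hK : 0 < K)
    (S : Set ℕ) (hS : hasDdensity S D) (η : ℝ) (hη0 : 0 < η) (hη1 : η < D / (2 - D)) :
    hasDdensity
      {m : ℕ | ∀ k : ℕ, k ≤ ⌊η * Real.logb 3 m⌋₊ → ∀ i : ℕ, i < K * 3 ^ k → 3 ^ k * m + i ∈ S}
      (D * (1 + η) - 2 * η) := by
  classical
  obtain ⟨C, hC0, hC⟩ := hS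
  have h2D : (0:ℝ) < 2 - D := by linarith
  have hD' : 0 < D * (1 + η) - 2 * η := by
    have h := (lt_div_iff₀ h2D).mp hη1
    nlinarith
  have hlog3 : (0:ℝ) < Real.log 3 := Real.log_pos (by norm_num)
  set C₂ : ℝ := (1 + 1/Real.log 3) * ((K:ℝ) * (((K:ℝ)+1) * C)) with hC₂def
  have hC₂0 : 0 < C₂ := by
    apply mul_pos
    · have : 0 < 1/Real.log 3 := by positivity
      linarith
    · exact mul_pos (by exact_mod_cast hK) (mul_pos (by positivity) hC0)
  refine ⟨C₂, hC₂0, ?_⟩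
  intro N hN
  have hNpos : (0:ℝ) < N := by exact_mod_cast hN
  have hNR : (1:ℝ) ≤ N := by exact_mod_cast hN
  -- bound on non-elements of S
  have hnonS : ∀ M : ℕ, 0 < M →
      (((Finset.Icc 1 M).filter (fun n => n ∉ S)).card : ℝ) ≤ C * (M:ℝ) ^ (1 - D) := by
    intro M hM
    have hMR : (0:ℝ) < M := by exact_mod_cast hM
    have hsum : countIn S M + ((Finset.Icc 1 M).filter (fun n => n ∉ S)).card = M := by
      rw [countIn]
      rw [Finset.card_filter_add_card_filter_not (fun n => n ∈ S)]
      rw [Nat.card_Icc]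
      omega
    have h1 : (1 - C / (M:ℝ)^D) * M ≤ (countIn S M : ℝ) := (le_div_iff₀ hMR).mp (hC M hM)
    have hr : (M:ℝ)^(1-D) = M / (M:ℝ)^D := by
      rw [Real.rpow_sub hMR, Real.rpow_one]
    have h2 : (M:ℝ) - C * (M:ℝ)^(1-D) ≤ (countIn S M : ℝ) := by
      rw [sub_mul, one_mul, div_mul_eq_mul_div, mul_div_assoc, ← hr] at h1
      exact h1
    have h3 : (((Finset.Icc 1 M).filter (fun n => n ∉ S)).card : ℝ)
        = (M:ℝ) - (countIn S M : ℝ) := by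
      have h4 : ((Finset.Icc 1 M).filter (fun n => n ∉ S)).card = M - countIn S M := by omega
      have hle : countIn S M ≤ M := by omega
      rw [h4, Nat.cast_sub hle]
    linarith
  set km := ⌊η * Real.logb 3 (N:ℝ)⌋₊ with hkmdef
  set B : ℕ → Finset ℕ := fun k =>
    (Finset.Icc 1 N).filter (fun m => ∃ i, i < K * 3 ^ k ∧ 3 ^ k * m + i ∉ S) with hBdef
  -- Step A
  have hA : ((Finset.Icc 1 N).filter (fun m =>
      m ∉ {m : ℕ | ∀ k : ℕ, k ≤ ⌊η * Real.logb 3 m⌋₊ →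
        ∀ i : ℕ, i < K * 3 ^ k → 3 ^ k * m + i ∈ S})).card
      ≤ ∑ k ∈ Finset.range (km+1), (B k).card := by
    refine le_trans (Finset.card_le_card ?_) (Finset.card_biUnion_le)
    intro m hm
    simp only [Finset.mem_filter, Finset.mem_Icc, Set.mem_setOf_eq] at hm
    obtain ⟨⟨hm1, hmN⟩, hmT⟩ := hm
    push_neg at hmT
    obtain ⟨k, hk, i, hi, hiS⟩ := hmT
    have hkkm : k ≤ km := by
      refine le_trans hk (Nat.floor_le_floor ?_)
      have hlm : Real.logb 3 (m:ℝ) ≤ Real.logb 3 (N:ℝ) := by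
        apply Real.logb_le_logb_of_le (by norm_num)
        · exact_mod_cast hm1
        · exact_mod_cast hmN
      exact mul_le_mul_of_nonneg_left hlm hη0.le
    rw [Finset.mem_biUnion]
    exact ⟨k, Finset.mem_range.mpr (by omega),
      Finset.mem_filter.mpr ⟨Finset.mem_Icc.mpr ⟨hm1, hmN⟩, ⟨i, hi, hiS⟩⟩⟩
  -- Step B
  have hB : ∀ k, (B k).card ≤
      K * ((Finset.Icc 1 ((N+K)*3^k)).filter (fun n => n ∉ S)).card := by
    intro k
    have h3k : 0 < 3^k := pow_pos (by norm_num) k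
    set f : ℕ → ℕ := fun m =>
      if h : ∃ i, i < K * 3 ^ k ∧ 3 ^ k * m + i ∉ S then 3 ^ k * m + Nat.find h else 0 with hfdef
    calc (B k).card ≤ K * ((B k).image f).card := by
          apply Finset.card_le_mul_card_image
          intro n hn
          have hsub : ((B k).filter (fun m => f m = n)) ⊆
              Finset.Ioc (n / 3^k - K) (n / 3^k) := by
            intro m hm
            simp only [Finset.mem_filter, hBdef, Finset.mem_Icc] at hm
            obtain ⟨⟨⟨hm1, hmN⟩, hex⟩, hfm⟩ := hm
            rw [hfdef] at hfm
            simp only [dif_pos hex] at hfm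
            obtain ⟨hilt, -⟩ := Nat.find_spec hex
            have hub : m ≤ n / 3^k := by
              rw [Nat.le_div_iff_mul_le h3k, mul_comm]
              omega
            have hlb : n / 3^k < m + K := by
              rw [Nat.div_lt_iff_lt_mul h3k]
              have h4 : (m + K) * 3^k = 3^k * m + K * 3^k := by ring
              omega
            rw [Finset.mem_Ioc]
            omega
          calc ((B k).filter (fun m => f m = n)).card
              ≤ (Finset.Ioc (n / 3^k - K) (n / 3^k)).card := Finset.card_le_card hsub
            _ ≤ K := by rw [Nat.card_Ioc]; omega
      _ ≤ K * ((Finset.Icc 1 ((N+K)*3^k)).filter (fun n => n ∉ S)).card := by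
          apply Nat.mul_le_mul_left
          apply Finset.card_le_card
          intro n hn
          rw [Finset.mem_image] at hn
          obtain ⟨m, hm, hfm⟩ := hn
          simp only [hBdef, Finset.mem_filter, Finset.mem_Icc] at hm
          obtain ⟨⟨hm1, hmN⟩, hex⟩ := hm
          rw [hfdef] at hfm
          simp only [dif_pos hex] at hfm
          obtain ⟨hilt, hiS⟩ := Nat.find_spec hex
          have h1 : 3^k * m ≤ 3^k * N := Nat.mul_le_mul_left _ hmN
          have h2 : 1 ≤ 3^k * m := Nat.one_le_iff_ne_zero.mpr (by positivity)
          have h3 : (N+K)*3^k = 3^k * N + K * 3^k := by ring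
          rw [Finset.mem_filter, Finset.mem_Icc]
          refine ⟨⟨by omega, by omega⟩, ?_⟩
          rw [← hfm]
          exact hiS
  -- real bounds
  have hlogbN : 0 ≤ Real.logb 3 (N:ℝ) := Real.logb_nonneg (by norm_num) hNR
  have hNη1 : (1:ℝ) ≤ (N:ℝ)^η := by
    have := Real.rpow_le_rpow_of_exponent_le hNR hη0.le
    rwa [Real.rpow_zero] at this
  have hfl : (km:ℝ) ≤ η * Real.logb 3 N := Nat.floor_le (by positivity)
  have h3km : ((3:ℝ))^km ≤ (N:ℝ)^η := by
    calc ((3:ℝ))^km = (3:ℝ)^(km:ℝ) := (Real.rpow_natCast 3 km).symm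
      _ ≤ (3:ℝ)^(η * Real.logb 3 N) := Real.rpow_le_rpow_of_exponent_le (by norm_num) hfl
      _ = ((3:ℝ)^(Real.logb 3 (N:ℝ)))^η := by
          rw [← Real.rpow_mul (by norm_num), mul_comm]
      _ = (N:ℝ)^η := by rw [Real.rpow_logb (by norm_num) (by norm_num) hNpos]
  have hkm1 : ((km:ℝ)+1) ≤ (1 + 1/Real.log 3) * (N:ℝ)^η := by
    have hlogle : Real.log N ≤ (N:ℝ)^η / η := Real.log_le_rpow_div hNpos.le hη0
    have key : η * Real.log N ≤ (N:ℝ)^η := by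
      calc η * Real.log N ≤ η * ((N:ℝ)^η/η) := mul_le_mul_of_nonneg_left hlogle hη0.le
        _ = (N:ℝ)^η := by field_simp
    have h2 : η * Real.logb 3 N ≤ (N:ℝ)^η / Real.log 3 := by
      rw [Real.logb, mul_div_assoc']
      gcongr
    calc ((km:ℝ)+1) ≤ (N:ℝ)^η / Real.log 3 + (N:ℝ)^η := by linarith
      _ = (1 + 1/Real.log 3) * (N:ℝ)^η := by ring
  -- bound each term
  have hterm : ∀ k ≤ km, ((K * ((Finset.Icc 1 ((N+K)*3^k)).filter (fun n => n ∉ S)).card : ℕ) : ℝ)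
      ≤ (K:ℝ) * (((K:ℝ)+1) * C) * (N:ℝ)^((1+η)*(1-D)) := by
    intro k hk
    have hMk : 0 < (N+K)*3^k := by positivity
    have h1 := hnonS _ hMk
    have hbase : (((N+K)*3^k : ℕ):ℝ) ≤ ((K:ℝ)+1) * (N:ℝ)^(1+η) := by
      push_cast
      have e1 : ((N:ℝ)+K) ≤ ((K:ℝ)+1) * N := by nlinarith [hNR, (Nat.cast_nonneg K : (0:ℝ) ≤ K)]
      have e2 : ((3:ℝ))^k ≤ (N:ℝ)^η := le_trans (pow_le_pow_right₀ (by norm_num) hk) h3km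
      have e3 : (N:ℝ)^(1+η) = N * (N:ℝ)^η := by
        rw [Real.rpow_add hNpos, Real.rpow_one]
      rw [e3]
      calc ((N:ℝ)+K) * 3^k ≤ (((K:ℝ)+1) * N) * (N:ℝ)^η :=
            mul_le_mul e1 e2 (by positivity) (by positivity)
        _ = ((K:ℝ)+1) * (N * (N:ℝ)^η) := by ring
    have hD1' : (0:ℝ) ≤ 1 - D := by linarith
    have h2 : (((N+K)*3^k : ℕ):ℝ)^(1-D) ≤ (((K:ℝ)+1) * (N:ℝ)^(1+η))^(1-D) :=
      Real.rpow_le_rpow (by positivity) hbase hD1'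
    have hK1 : (1:ℝ) ≤ (K:ℝ)+1 := by
      have := (Nat.cast_nonneg K : (0:ℝ) ≤ K)
      linarith
    have hKpow : ((K:ℝ)+1)^(1-D) ≤ ((K:ℝ)+1) := by
      calc ((K:ℝ)+1)^(1-D) ≤ ((K:ℝ)+1)^(1:ℝ) :=
            Real.rpow_le_rpow_of_exponent_le hK1 (by linarith)
        _ = (K:ℝ)+1 := Real.rpow_one _
    have h3 : (((K:ℝ)+1) * (N:ℝ)^(1+η))^(1-D) ≤ ((K:ℝ)+1) * (N:ℝ)^((1+η)*(1-D)) := by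
      rw [Real.mul_rpow (by positivity) (by positivity), ← Real.rpow_mul hNpos.le]
      exact mul_le_mul_of_nonneg_right hKpow (by positivity)
    rw [Nat.cast_mul]
    have h4 : C * (((N+K)*3^k : ℕ):ℝ)^(1-D) ≤ C * (((K:ℝ)+1) * (N:ℝ)^((1+η)*(1-D))) :=
      mul_le_mul_of_nonneg_left (h2.trans h3) hC0.le
    exact (mul_le_mul_of_nonneg_left (h1.trans h4) (Nat.cast_nonneg K)).trans_eq (by ring)
  -- combine
  set bad := ((Finset.Icc 1 N).filter (fun m =>
      m ∉ {m : ℕ | ∀ k : ℕ, k ≤ ⌊η * Real.logb 3 m⌋₊ →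
        ∀ i : ℕ, i < K * 3 ^ k → 3 ^ k * m + i ∈ S})).card with hbaddef
  have hbadR : (bad : ℝ) ≤ C₂ * (N:ℝ)^(1 - (D*(1+η) - 2*η)) := by
    have step1 : (bad : ℝ) ≤ ∑ k ∈ Finset.range (km+1),
        ((K * ((Finset.Icc 1 ((N+K)*3^k)).filter (fun n => n ∉ S)).card : ℕ) : ℝ) := by
      have : bad ≤ ∑ k ∈ Finset.range (km+1),
          K * ((Finset.Icc 1 ((N+K)*3^k)).filter (fun n => n ∉ S)).card :=
        le_trans hA (Finset.sum_le_sum (fun k _ => hB k))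
      exact_mod_cast this
    have step2 : (bad : ℝ) ≤ ((km:ℝ)+1) * ((K:ℝ) * (((K:ℝ)+1) * C) * (N:ℝ)^((1+η)*(1-D))) := by
      refine le_trans step1 ?_
      calc ∑ k ∈ Finset.range (km+1),
          ((K * ((Finset.Icc 1 ((N+K)*3^k)).filter (fun n => n ∉ S)).card : ℕ) : ℝ)
          ≤ ∑ _k ∈ Finset.range (km+1),
            ((K:ℝ) * (((K:ℝ)+1) * C) * (N:ℝ)^((1+η)*(1-D))) := by
            refine Finset.sum_le_sum (fun k hk => ?_)
            exact hterm k (by simpa [Nat.lt_succ_iff] using Finset.mem_range.mp hk)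
        _ = ((km:ℝ)+1) * ((K:ℝ) * (((K:ℝ)+1) * C) * (N:ℝ)^((1+η)*(1-D))) := by
            rw [Finset.sum_const, Finset.card_range]
            ring
    have step3 : ((km:ℝ)+1) * ((K:ℝ) * (((K:ℝ)+1) * C) * (N:ℝ)^((1+η)*(1-D)))
        ≤ (1 + 1/Real.log 3) * (N:ℝ)^η * ((K:ℝ) * (((K:ℝ)+1) * C) * (N:ℝ)^((1+η)*(1-D))) :=
      mul_le_mul_of_nonneg_right hkm1 (by positivity)
    have step4 : (1 + 1/Real.log 3) * (N:ℝ)^η * ((K:ℝ) * (((K:ℝ)+1) * C) * (N:ℝ)^((1+η)*(1-D)))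
        = C₂ * (N:ℝ)^(1 - (D*(1+η) - 2*η)) := by
      rw [hC₂def]
      have : (N:ℝ)^η * (N:ℝ)^((1+η)*(1-D)) = (N:ℝ)^(1 - (D*(1+η) - 2*η)) := by
        rw [← Real.rpow_add hNpos]
        congr 1
        ring
      calc (1 + 1/Real.log 3) * (N:ℝ)^η * ((K:ℝ) * (((K:ℝ)+1) * C) * (N:ℝ)^((1+η)*(1-D)))
          = (1 + 1/Real.log 3) * ((K:ℝ) * (((K:ℝ)+1) * C))
            * ((N:ℝ)^η * (N:ℝ)^((1+η)*(1-D))) := by ring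
        _ = (1 + 1/Real.log 3) * ((K:ℝ) * (((K:ℝ)+1) * C)) * (N:ℝ)^(1 - (D*(1+η) - 2*η)) := by
            rw [this]
    linarith [step2, step3, step4.le, step4.ge]
  -- finish
  have hcount : (countIn {m : ℕ | ∀ k : ℕ, k ≤ ⌊η * Real.logb 3 m⌋₊ →
      ∀ i : ℕ, i < K * 3 ^ k → 3 ^ k * m + i ∈ S} N : ℝ) = (N:ℝ) - (bad:ℝ) := by
    have hnat : countIn {m : ℕ | ∀ k : ℕ, k ≤ ⌊η * Real.logb 3 m⌋₊ →
        ∀ i : ℕ, i < K * 3 ^ k → 3 ^ k * m + i ∈ S} N + bad = N := by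
      rw [countIn, hbaddef]
      rw [Finset.card_filter_add_card_filter_not]
      rw [Nat.card_Icc]
      omega
    have hle : bad ≤ N := by omega
    have h4 : countIn {m : ℕ | ∀ k : ℕ, k ≤ ⌊η * Real.logb 3 m⌋₊ →
        ∀ i : ℕ, i < K * 3 ^ k → 3 ^ k * m + i ∈ S} N = N - bad := by omega
    rw [h4, Nat.cast_sub hle]
  rw [le_div_iff₀ hNpos]
  have hpow : (0:ℝ) < (N:ℝ)^(D*(1+η)-2*η) := Real.rpow_pos_of_pos hNpos _
  have hexp : (1 - C₂/(N:ℝ)^(D*(1+η)-2*η)) * N = (N:ℝ) - C₂ * (N:ℝ)^(1-(D*(1+η)-2*η)) := by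
    have e : (N:ℝ)^(1-(D*(1+η)-2*η)) = N / (N:ℝ)^(D*(1+η)-2*η) := by
      rw [Real.rpow_sub hNpos, Real.rpow_one]
    rw [e]
    field_simp
  rw [hexp, hcount]
  linarith
end

section
/- Suppose α ∈ (0, log₃ 2], 0 < D ≤ 1, and S ⊆ ℤ⁺ has D-density. Then the set {m ∈ ℤ⁺ : ⌊(3^(⌊α·⌊log₂ m⌋⌋)/2^(⌊log₂ m⌋)) · m⌋ ∈ S} has (D·α·log₂ 3)-density. -/
open Finset

lemma floor_logb_nat (m : ℕ) : ⌊Real.logb 2 (m : ℝ)⌋₊ = Nat.log 2 m := by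
  rw [show ((2:ℝ)) = ((2:ℕ):ℝ) by norm_num, ← Int.floor_toNat,
    Real.floor_logb_natCast (by positivity), Int.log_natCast, Int.toNat_natCast]

lemma pow3_unique {j₁ j₂ n : ℕ} (h1 : 3 ^ j₁ ≤ n) (h2 : n < 2 * 3 ^ j₁)
    (h3 : 3 ^ j₂ ≤ n) (h4 : n < 2 * 3 ^ j₂) : j₁ = j₂ := by
  rcases lt_trichotomy j₁ j₂ with h | h | h
  · have : 3 ^ (j₁ + 1) ≤ 3 ^ j₂ := Nat.pow_le_pow_right (by norm_num) h
    simp [pow_succ] at this; omega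
  · exact h
  · have : 3 ^ (j₂ + 1) ≤ 3 ^ j₁ := Nat.pow_le_pow_right (by norm_num) h
    simp [pow_succ] at this; omega

lemma rpow3 (x : ℝ) : (3:ℝ) ^ x = (2:ℝ) ^ (x * Real.logb 2 3) := by
  rw [mul_comm, Real.rpow_mul (by norm_num : (0:ℝ) ≤ 2),
    Real.rpow_logb (by norm_num) (by norm_num) (by norm_num)]

/-- The scaling function. -/
noncomputable def scaleFun (α : ℝ) (m : ℕ) : ℕ :=
  ⌊(3:ℝ) ^ ⌊α * (Nat.log 2 m : ℝ)⌋₊ / 2 ^ Nat.log 2 m * m⌋₊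

lemma scaleFun_sandwich (α : ℝ) (hα0 : 0 ≤ α) {m : ℕ} (hm : 1 ≤ m) :
    3 ^ ⌊α * (Nat.log 2 m : ℝ)⌋₊ ≤ scaleFun α m ∧
      scaleFun α m < 2 * 3 ^ ⌊α * (Nat.log 2 m : ℝ)⌋₊ := by
  set k := Nat.log 2 m with hk
  set j := ⌊α * (k : ℝ)⌋₊ with hj
  have h2k : ((2:ℝ))^k ≤ m := by
    exact_mod_cast Nat.cast_le.mpr (Nat.pow_log_le_self 2 (by omega))
  have h2k' : (m:ℝ) < 2^(k+1) := by
    exact_mod_cast Nat.cast_lt.mpr (Nat.lt_pow_succ_log_self (by norm_num) m)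
  have h2kpos : (0:ℝ) < 2^k := by positivity
  have h3jpos : (0:ℝ) < (3:ℝ)^j := by positivity
  have hlow : (3:ℝ)^j ≤ (3:ℝ)^j / 2^k * m := by
    rw [div_mul_eq_mul_div, le_div_iff₀ h2kpos]
    nlinarith
  have hhigh : (3:ℝ)^j / 2^k * m < 2 * 3^j := by
    rw [div_mul_eq_mul_div, div_lt_iff₀ h2kpos]
    have : (2:ℝ)^(k+1) = 2*2^k := by ring
    nlinarith
  constructor
  · apply Nat.le_floor
    push_cast
    exact hlow
  · rw [scaleFun, ← hk, ← hj]
    refine (Nat.floor_lt (by positivity)).mpr ?_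
    push_cast
    exact hhigh


set_option maxHeartbeats 2000000 in
theorem scale_density (α : ℝ) (hα0 : 0 < α) (hα1 : α ≤ Real.logb 3 2)
    (D : ℝ) (hD0 : 0 < D) (hD1 : D ≤ 1) (S : Set ℕ) (hS : hasDdensity S D) :
    hasDdensity
      {m : ℕ |
        ⌊(3 : ℝ) ^ ⌊α * ⌊Real.logb 2 m⌋₊⌋₊ / 2 ^ ⌊Real.logb 2 m⌋₊ * m⌋₊ ∈ S}
      (D * α * Real.logb 2 3) := by
  classical
  have hsetEq : {m : ℕ |
        ⌊(3 : ℝ) ^ ⌊α * ⌊Real.logb 2 m⌋₊⌋₊ / 2 ^ ⌊Real.logb 2 m⌋₊ * m⌋₊ ∈ S}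
      = {m : ℕ | scaleFun α m ∈ S} := by
    ext m
    simp only [Set.mem_setOf_eq, floor_logb_nat, scaleFun]
  rw [hsetEq]
  obtain ⟨C, hC0, hC⟩ := hS
  set L : ℝ := Real.logb 2 3 with hLdef
  have hL1 : 1 < L := by
    rw [hLdef]
    rw [Real.lt_logb_iff_rpow_lt (by norm_num) (by norm_num)]
    norm_num
  have hL0 : 0 < L := by linarith
  have hαL1 : α * L ≤ 1 := by
    have h1 : α ≤ L⁻¹ := by
      rw [hLdef, Real.inv_logb]; exact hα1
    calc α * L ≤ L⁻¹ * L := mul_le_mul_of_nonneg_right h1 hL0.le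
      _ = 1 := inv_mul_cancel₀ hL0.ne'
  have hβ1 : D * α * L ≤ 1 := by nlinarith
  have hβ0 : 0 < D * α * L := by positivity
  refine ⟨8 * C * (2/α + 1), by positivity, ?_⟩
  intro N hN0
  have hNR : (0:ℝ) < N := by exact_mod_cast hN0
  set K := Nat.log 2 N with hK
  set J := ⌊α * (K:ℝ)⌋₊ with hJ
  set M := 2 * 3 ^ J with hM
  have hMpos : 0 < M := by positivity
  have hMR : (0:ℝ) < M := by exact_mod_cast hMpos
  set Q := ⌊(3:ℝ) * 2 ^ ((K:ℝ) * (1 - α*L))⌋₊ + 1 with hQ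
  set A := 2 * ⌊1/α⌋₊ + 1 with hA
  set badM := (Icc 1 N).filter (fun m => ¬ scaleFun α m ∈ S) with hbadM
  set badN := (Icc 1 M).filter (fun n => ¬ n ∈ S) with hbadN
  -- inverse density bound
  have hinv : ∀ k : ℕ, k ≤ K → (2:ℝ)^k / 3^(⌊α*(k:ℝ)⌋₊) < (Q:ℝ) := by
    intro k hk
    have h1 : (3:ℝ)^((α*(k:ℝ) - 1 : ℝ)) ≤ (3:ℝ)^(⌊α*(k:ℝ)⌋₊) := by
      rw [← Real.rpow_natCast 3 (⌊α*(k:ℝ)⌋₊)]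
      apply Real.rpow_le_rpow_of_exponent_le (by norm_num)
      have := Nat.sub_one_lt_floor (α*(k:ℝ))
      linarith
    have h2 : (2:ℝ)^k / 3^(⌊α*(k:ℝ)⌋₊) ≤ (2:ℝ)^k / 3^((α*(k:ℝ) - 1 : ℝ)) := by
      apply div_le_div_of_nonneg_left (by positivity) (by positivity) h1
    have h3 : (2:ℝ)^k / 3^((α*(k:ℝ) - 1 : ℝ)) = 3 * (2:ℝ)^(((k:ℝ) - α*(k:ℝ)*L)) := by
      rw [Real.rpow_sub (by norm_num : (0:ℝ) < 3), Real.rpow_one, rpow3 (α*(k:ℝ)),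
        div_div_eq_mul_div, mul_comm ((2:ℝ)^k) 3, mul_div_assoc,
        ← Real.rpow_natCast 2 k, ← Real.rpow_sub (by norm_num : (0:ℝ) < 2)]
    have h4 : (2:ℝ)^(((k:ℝ) - α*(k:ℝ)*L)) ≤ (2:ℝ)^((K:ℝ)*(1 - α*L)) := by
      apply Real.rpow_le_rpow_of_exponent_le (by norm_num)
      have hk' : (k:ℝ) ≤ K := Nat.cast_le.mpr hk
      have he : (k:ℝ) - α*(k:ℝ)*L = (k:ℝ)*(1 - α*L) := by ring
      rw [he]
      exact mul_le_mul_of_nonneg_right hk' (by linarith)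
    have h5 : (3:ℝ) * 2^((K:ℝ)*(1 - α*L)) < (Q:ℝ) := by
      rw [hQ]
      push_cast
      exact Nat.lt_floor_add_one _
    calc (2:ℝ)^k / 3^(⌊α*(k:ℝ)⌋₊) ≤ (2:ℝ)^k / 3^((α*(k:ℝ) - 1 : ℝ)) := h2
      _ = 3 * (2:ℝ)^(((k:ℝ) - α*(k:ℝ)*L)) := h3
      _ ≤ 3 * (2:ℝ)^((K:ℝ)*(1 - α*L)) := by linarith [h4]
      _ < Q := h5
  -- maps into badN
  have maps : ∀ m ∈ badM, scaleFun α m ∈ badN := by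
    intro m hm
    rw [hbadM, mem_filter, mem_Icc] at hm
    obtain ⟨⟨hm1, hmN⟩, hmS⟩ := hm
    obtain ⟨hs1, hs2⟩ := scaleFun_sandwich α hα0.le hm1
    have hjle : ⌊α * (Nat.log 2 m : ℝ)⌋₊ ≤ J := by
      rw [hJ]
      apply Nat.floor_le_floor
      have : (Nat.log 2 m : ℝ) ≤ K := by
        exact_mod_cast (Nat.log_mono_right hmN : Nat.log 2 m ≤ Nat.log 2 N)
      nlinarith
    have hple : 3 ^ ⌊α * (Nat.log 2 m : ℝ)⌋₊ ≤ 3 ^ J := Nat.pow_le_pow_right (by norm_num) hjle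
    have h31 : 1 ≤ 3 ^ ⌊α * (Nat.log 2 m : ℝ)⌋₊ := Nat.one_le_pow _ _ (by norm_num)
    rw [hbadN, mem_filter, mem_Icc]
    exact ⟨⟨by omega, by omega⟩, hmS⟩
  -- fiber bound
  have fiber : ∀ n ∈ badN, (badM.filter (fun m => scaleFun α m = n)).card ≤ A * Q := by
    intro n hn
    set s' := badM.filter (fun m => scaleFun α m = n) with hs'
    -- elements of s' satisfy: m ∈ [1,N], scaleFun α m = n
    have hs'mem : ∀ m ∈ s', (1 ≤ m ∧ m ≤ N) ∧ scaleFun α m = n := by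
      intro m hm
      rw [hs', mem_filter, hbadM, mem_filter, mem_Icc] at hm
      exact ⟨hm.1.1, hm.2⟩
    -- subfibers along Nat.log 2
    have subfiber : ∀ k ∈ s'.image (fun m => Nat.log 2 m),
        (s'.filter (fun m => Nat.log 2 m = k)).card ≤ Q := by
      intro k hk
      set j := ⌊α*(k:ℝ)⌋₊ with hj
      set a := ⌈(n:ℝ) * 2^k / 3^j⌉₊ with ha
      have hsubset : s'.filter (fun m => Nat.log 2 m = k) ⊆ Finset.Ico a (a + Q) := by
        intro m hm
        rw [mem_filter] at hm
        obtain ⟨hms', hkm⟩ := hm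
        obtain ⟨⟨hm1, hmN⟩, hfmn⟩ := hs'mem m hms'
        have hkK : k ≤ K := by rw [← hkm, hK]; exact Nat.log_mono_right hmN
        have hQb : (2:ℝ)^k / 3^j < (Q:ℝ) := hinv k hkK
        have hargnn : (0:ℝ) ≤ (3:ℝ)^j / 2^k * m := by positivity
        have harg : scaleFun α m = ⌊(3:ℝ)^j / 2^k * m⌋₊ := by
          rw [scaleFun, hkm]
        have hnle : (n:ℝ) ≤ (3:ℝ)^j / 2^k * m := by
          rw [← hfmn, harg]
          exact Nat.floor_le hargnn
        have hup : (3:ℝ)^j / 2^k * m < (n:ℝ) + 1 := by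
          rw [← hfmn, harg]
          push_cast
          exact Nat.lt_floor_add_one _
        have h3jpos : (0:ℝ) < (3:ℝ)^j := by positivity
        have h2kpos : (0:ℝ) < (2:ℝ)^k := by positivity
        have hmlb : (n:ℝ) * 2^k / 3^j ≤ m := by
          rw [div_le_iff₀ h3jpos]
          rw [div_mul_eq_mul_div, le_div_iff₀ h2kpos] at hnle
          nlinarith
        have hmub : (m:ℝ) < (n:ℝ) * 2^k / 3^j + 2^k/3^j := by
          have he : (n:ℝ)*2^k/3^j + 2^k/3^j = (((n:ℝ)+1) * 2^k)/3^j := by ring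
          rw [he, lt_div_iff₀ h3jpos]
          rw [div_mul_eq_mul_div, div_lt_iff₀ h2kpos] at hup
          nlinarith
        rw [mem_Ico]
        constructor
        · rw [ha]; exact Nat.ceil_le.mpr hmlb
        · have hcast : (m:ℝ) < (a:ℝ) + Q := by
            have := Nat.le_ceil ((n:ℝ) * 2^k / 3^j)
            rw [← ha] at this
            linarith
          exact_mod_cast hcast
      calc (s'.filter (fun m => Nat.log 2 m = k)).card ≤ (Finset.Ico a (a+Q)).card :=
            card_le_card hsubset
        _ = Q := by rw [Nat.card_Ico]; omega
    -- image bound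
    have imgbound : (s'.image (fun m => Nat.log 2 m)).card ≤ A := by
      rcases (s'.image (fun m => Nat.log 2 m)).eq_empty_or_nonempty with he | ⟨k₀, hk₀⟩
      · rw [he]; simp
      · have hmemint : ∀ k ∈ s'.image (fun m => Nat.log 2 m),
            3 ^ ⌊α*(k:ℝ)⌋₊ ≤ n ∧ n < 2 * 3 ^ ⌊α*(k:ℝ)⌋₊ := by
          intro k hk
          obtain ⟨m, hms', hkm⟩ := mem_image.mp hk
          obtain ⟨⟨hm1, hmN⟩, hfmn⟩ := hs'mem m hms'
          have := scaleFun_sandwich α hα0.le hm1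
          rw [hkm, hfmn] at this
          exact this
        have hjeq : ∀ k ∈ s'.image (fun m => Nat.log 2 m), ⌊α*(k:ℝ)⌋₊ = ⌊α*((k₀:ℕ):ℝ)⌋₊ := by
          intro k hk
          obtain ⟨ha1, ha2⟩ := hmemint k hk
          obtain ⟨hb1, hb2⟩ := hmemint k₀ hk₀
          exact pow3_unique ha1 ha2 hb1 hb2
        have hsubset : s'.image (fun m => Nat.log 2 m) ⊆
            Finset.Icc (k₀ - ⌊1/α⌋₊) (k₀ + ⌊1/α⌋₊) := by
          intro k hk
          have h1 : (⌊α*((k₀:ℕ):ℝ)⌋₊ :ℝ) ≤ α*(k:ℝ) := by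
            rw [← hjeq k hk]; exact Nat.floor_le (by positivity)
          have h2 : α*(k:ℝ) < (⌊α*((k₀:ℕ):ℝ)⌋₊:ℝ) + 1 := by
            rw [← hjeq k hk]; exact Nat.lt_floor_add_one _
          have h3 : (⌊α*((k₀:ℕ):ℝ)⌋₊:ℝ) ≤ α*(k₀:ℝ) := Nat.floor_le (by positivity)
          have h4 : α*((k₀:ℕ):ℝ) < (⌊α*((k₀:ℕ):ℝ)⌋₊:ℝ) + 1 := Nat.lt_floor_add_one _
          have hfl : (1:ℝ)/α - 1 < (⌊1/α⌋₊:ℝ) := Nat.sub_one_lt_floor _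
          have hkk : (k:ℝ) < (k₀:ℝ) + 1/α := by
            have h5 : α * ((k:ℝ) - k₀) < 1 := by nlinarith
            have h6 : (k:ℝ) - k₀ < 1/α := by
              rw [lt_div_iff₀ hα0]; nlinarith
            linarith
          have hk₀k : (k₀:ℝ) < (k:ℝ) + 1/α := by
            have h5 : α * ((k₀:ℝ) - k) < 1 := by nlinarith
            have h6 : (k₀:ℝ) - k < 1/α := by
              rw [lt_div_iff₀ hα0]; nlinarith
            linarith
          rw [mem_Icc]
          constructor
          · -- k₀ - ⌊1/α⌋₊ ≤ k
            by_contra hcon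
            push_neg at hcon
            have h7 : k + ⌊1/α⌋₊ + 1 ≤ k₀ := by omega
            have h8 : (k:ℝ) + (⌊1/α⌋₊:ℝ) + 1 ≤ (k₀:ℝ) := by exact_mod_cast h7
            linarith
          · by_contra hcon
            push_neg at hcon
            have h7 : (k₀:ℕ) + ⌊1/α⌋₊ + 1 ≤ k := by omega
            have h8 : ((k₀:ℕ):ℝ) + (⌊1/α⌋₊:ℝ) + 1 ≤ (k:ℝ) := by exact_mod_cast h7
            linarith
        calc (s'.image (fun m => Nat.log 2 m)).card
            ≤ (Finset.Icc (k₀ - ⌊1/α⌋₊) (k₀ + ⌊1/α⌋₊)).card := card_le_card hsubset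
          _ ≤ A := by rw [Nat.card_Icc, hA]; omega
    calc s'.card ≤ Q * (s'.image (fun m => Nat.log 2 m)).card :=
          card_le_mul_card_image s' Q subfiber
      _ ≤ Q * A := Nat.mul_le_mul_left Q imgbound
      _ = A * Q := Nat.mul_comm Q A
  have hcount : badM.card ≤ (A * Q) * badN.card :=
    card_le_mul_card_image_of_maps_to maps (A*Q) fiber
  -- bound on badN card
  have hcountS : ((Icc 1 M).filter (fun n => n ∈ S)).card + badN.card = M := by
    rw [hbadN, Finset.card_filter_add_card_filter_not, Nat.card_Icc]
    omega
  have hbadNle : (badN.card : ℝ) ≤ C * (M:ℝ)^(1-D) := by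
    have hCM := hC M hMpos
    have hcIn : countIn S M = ((Icc 1 M).filter (fun n => n ∈ S)).card := rfl
    have h5 : (M:ℝ)^(1-D) = M / (M:ℝ)^D := by
      rw [Real.rpow_sub hMR, Real.rpow_one]
    have hMD : (0:ℝ) < (M:ℝ)^D := Real.rpow_pos_of_pos hMR D
    have h7 : (M:ℝ) * (1 - C/(M:ℝ)^D) ≤ countIn S M := by
      have h8 := mul_le_mul_of_nonneg_left hCM hMR.le
      have h9 : (M:ℝ) * ((countIn S M : ℝ) / M) = countIn S M := by field_simp
      linarith
    have h9 : (badN.card:ℝ) = (M:ℝ) - ((Icc 1 M).filter (fun n => n ∈ S)).card := by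
      have h10 : (((Icc 1 M).filter (fun n => n ∈ S)).card : ℝ) + badN.card = M := by
        exact_mod_cast hcountS
      linarith
    rw [h9, ← hcIn, h5]
    have h11 : (M:ℝ)*(1 - C/(M:ℝ)^D) = (M:ℝ) - C*((M:ℝ)/(M:ℝ)^D) := by ring
    linarith
  -- real bounds on A and Q
  have hAle : (A:ℝ) ≤ 2/α + 1 := by
    rw [hA]
    push_cast
    have h1 : (⌊1/α⌋₊:ℝ) ≤ 1/α := Nat.floor_le (by positivity)
    have h2 : (2:ℝ)/α = 2*(1/α) := by ring
    linarith
  have hE1 : (0:ℝ) ≤ (K:ℝ)*(1-α*L) := by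
    apply mul_nonneg (Nat.cast_nonneg K)
    linarith
  have hQle : (Q:ℝ) ≤ 4 * 2^((K:ℝ)*(1-α*L)) := by
    rw [hQ]
    push_cast
    have h1 : (⌊(3:ℝ)*2^((K:ℝ)*(1-α*L))⌋₊:ℝ) ≤ 3*2^((K:ℝ)*(1-α*L)) :=
      Nat.floor_le (by positivity)
    have h2 : (1:ℝ) ≤ 2^((K:ℝ)*(1-α*L)) := Real.one_le_rpow (by norm_num) hE1
    linarith
  have hMle : (M:ℝ)^(1-D) ≤ 2 * (2:ℝ)^((K:ℝ)*(α*L)*(1-D)) := by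
    have hMcast : (M:ℝ) = 2 * (3:ℝ)^J := by rw [hM]; push_cast; ring
    rw [hMcast, Real.mul_rpow (by norm_num) (by positivity)]
    have hA2 : (2:ℝ)^((1:ℝ)-D) ≤ 2 := by
      nth_rewrite 2 [show (2:ℝ) = 2^(1:ℝ) by rw [Real.rpow_one]]
      exact Real.rpow_le_rpow_of_exponent_le (by norm_num) (by linarith)
    have hA3 : ((3:ℝ)^J)^((1:ℝ)-D) = (2:ℝ)^((J:ℝ)*(1-D)*L) := by
      rw [← Real.rpow_natCast 3 J, ← Real.rpow_mul (by norm_num : (0:ℝ) ≤ 3), rpow3]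
    have hA4 : (2:ℝ)^((J:ℝ)*(1-D)*L) ≤ (2:ℝ)^((K:ℝ)*(α*L)*(1-D)) := by
      apply Real.rpow_le_rpow_of_exponent_le (by norm_num)
      have hJle : (J:ℝ) ≤ α*(K:ℝ) := Nat.floor_le (by positivity)
      have he : (K:ℝ)*(α*L)*(1-D) = (α*(K:ℝ))*(1-D)*L := by ring
      rw [he]
      apply mul_le_mul_of_nonneg_right _ hL0.le
      apply mul_le_mul_of_nonneg_right hJle (by linarith)
    rw [hA3]
    exact mul_le_mul hA2 hA4 (by positivity) (by norm_num)
  have hexp : (2:ℝ)^((K:ℝ)*(1-α*L)) * (2:ℝ)^((K:ℝ)*(α*L)*(1-D)) = (2:ℝ)^((K:ℝ)*(1-D*α*L)) := by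
    rw [← Real.rpow_add (by norm_num : (0:ℝ) < 2)]
    congr 1
    ring
  have h2KN : (2:ℝ)^((K:ℝ)*(1-D*α*L)) ≤ (N:ℝ)^(1-D*α*L) := by
    rw [Real.rpow_mul (by norm_num : (0:ℝ) ≤ 2)]
    have h2 : (2:ℝ)^((K:ℝ)) ≤ (N:ℝ) := by
      rw [Real.rpow_natCast]
      exact_mod_cast Nat.cast_le.mpr (Nat.pow_log_le_self 2 hN0.ne')
    exact Real.rpow_le_rpow (by positivity) h2 (by linarith)
  have hbadMle : (badM.card:ℝ) ≤ 8*C*(2/α+1) * (N:ℝ)^(1-D*α*L) := by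
    have hc1 : (badM.card:ℝ) ≤ (A:ℝ)*(Q:ℝ)*(badN.card:ℝ) := by
      have := hcount
      push_cast
      exact_mod_cast this
    calc (badM.card:ℝ) ≤ (A:ℝ)*(Q:ℝ)*(badN.card:ℝ) := hc1
      _ ≤ ((2/α+1) * (4*2^((K:ℝ)*(1-α*L)))) * (C * (2*(2:ℝ)^((K:ℝ)*(α*L)*(1-D)))) := by
          apply mul_le_mul
          · apply mul_le_mul hAle hQle (Nat.cast_nonneg Q) (by positivity)
          · calc (badN.card:ℝ) ≤ C*(M:ℝ)^(1-D) := hbadNle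
              _ ≤ C * (2*(2:ℝ)^((K:ℝ)*(α*L)*(1-D))) :=
                mul_le_mul_of_nonneg_left hMle hC0.le
          · exact Nat.cast_nonneg _
          · positivity
      _ = 8*C*(2/α+1) * ((2:ℝ)^((K:ℝ)*(1-α*L)) * (2:ℝ)^((K:ℝ)*(α*L)*(1-D))) := by ring
      _ = 8*C*(2/α+1) * (2:ℝ)^((K:ℝ)*(1-D*α*L)) := by rw [hexp]
      _ ≤ 8*C*(2/α+1) * (N:ℝ)^(1-D*α*L) := by
          apply mul_le_mul_of_nonneg_left h2KN (by positivity)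
  -- conclusion
  have hsplitN : countIn {m : ℕ | scaleFun α m ∈ S} N + badM.card = N := by
    have h1 : countIn {m : ℕ | scaleFun α m ∈ S} N = ((Icc 1 N).filter (fun m => scaleFun α m ∈ S)).card := rfl
    rw [h1, hbadM, Finset.card_filter_add_card_filter_not, Nat.card_Icc]
    omega
  have hcT : (countIn {m : ℕ | scaleFun α m ∈ S} N : ℝ) = (N:ℝ) - badM.card := by
    have h1 : (countIn {m : ℕ | scaleFun α m ∈ S} N : ℝ) + badM.card = N := by
      exact_mod_cast hsplitN
    linarith
  rw [hcT]
  have hNβ : (0:ℝ) < (N:ℝ)^(D*α*L) := Real.rpow_pos_of_pos hNR _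
  have hfrac : ((N:ℝ) - badM.card)/N = 1 - (badM.card:ℝ)/N := by field_simp
  rw [hfrac]
  have key : (badM.card:ℝ)/N ≤ 8*C*(2/α+1)/(N:ℝ)^(D*α*L) := by
    rw [div_le_div_iff₀ hNR hNβ]
    have hpow : (N:ℝ)^(1-D*α*L) * (N:ℝ)^(D*α*L) = N := by
      rw [← Real.rpow_add hNR, show (1-D*α*L)+(D*α*L) = 1 by ring, Real.rpow_one]
    calc (badM.card:ℝ) * (N:ℝ)^(D*α*L)
        ≤ (8*C*(2/α+1) * (N:ℝ)^(1-D*α*L)) * (N:ℝ)^(D*α*L) :=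
          mul_le_mul_of_nonneg_right hbadMle hNβ.le
      _ = 8*C*(2/α+1) * ((N:ℝ)^(1-D*α*L) * (N:ℝ)^(D*α*L)) := by ring
      _ = 8*C*(2/α+1) * N := by rw [hpow]
  linarith
end
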